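/- Let p be a prime and let H_p = {(a,b,0) ∈ G_p : a, b ∈ ℤ}. Let K be any group and ι : G_p → K an injective group homomorphism such that ι(H_p) is a normal subgroup of K. Define τ : K → ℂ by τ(g) = 1 if g ∈ ι(H_p) and τ(g) = 0 otherwise. Then τ is not a pointwise limit of finite-dimensional traces of K: there is no sequence of positive integers (n_k) and group homomorphisms σ_k : K → U(n_k) such that Tr_{n_k}(σ_k(g)) → τ(g) for every g ∈ K. -/

import Mathlib

open Filter Topology

/-- `ℤ[1/p]` as an additive subgroup of `ℚ`: rationals of the form `k / p^n`. -/
def Zp (p : ℕ) : AddSubgroup ℚ where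
  carrier := {q : ℚ | ∃ (k : ℤ) (n : ℕ), q * (p : ℚ) ^ n = (k : ℚ)}
  zero_mem' := ⟨0, 0, by norm_num⟩
  add_mem' := by
    rintro a b ⟨k1, n1, h1⟩ ⟨k2, n2, h2⟩
    refine ⟨k1 * (p : ℤ) ^ n2 + k2 * (p : ℤ) ^ n1, n1 + n2, ?_⟩
    push_cast
    calc (a + b) * (p : ℚ) ^ (n1 + n2)
        = a * (p : ℚ) ^ n1 * (p : ℚ) ^ n2 + b * (p : ℚ) ^ n2 * (p : ℚ) ^ n1 := by
          rw [pow_add]; ring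
      _ = (k1 : ℚ) * (p : ℚ) ^ n2 + (k2 : ℚ) * (p : ℚ) ^ n1 := by rw [h1, h2]
  neg_mem' := by
    rintro a ⟨k, n, h⟩
    refine ⟨-k, n, ?_⟩
    push_cast
    rw [neg_mul, h]

lemma one_mem_Zp (p : ℕ) : (1 : ℚ) ∈ Zp p := ⟨1, 0, by norm_num⟩

/-- The group `G_p = ℤ[1/p]² ⋊ ℤ`, realized as triples `(a, b, c)` with the
multiplication `(a₁,b₁,c₁)(a₂,b₂,c₂) = (a₁+a₂+c₁b₂, b₁+b₂, c₁+c₂)`. -/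
abbrev Gp (p : ℕ) : Type := Zp p × Zp p × ℤ

instance Gp.instGroup (p : ℕ) : Group (Gp p) where
  mul x y := ⟨x.1 + y.1 + x.2.2 • y.2.1, x.2.1 + y.2.1, x.2.2 + y.2.2⟩
  one := ⟨0, 0, 0⟩
  inv x := ⟨-x.1 + x.2.2 • x.2.1, -x.2.1, -x.2.2⟩
  mul_assoc x y z := by
    refine Prod.ext ?_ (Prod.ext ?_ ?_)
    · show x.1 + y.1 + x.2.2 • y.2.1 + z.1 + (x.2.2 + y.2.2) • z.2.1 =
        x.1 + (y.1 + z.1 + y.2.2 • z.2.1) + x.2.2 • (y.2.1 + z.2.1)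
      rw [add_smul, smul_add]; abel
    · show x.2.1 + y.2.1 + z.2.1 = x.2.1 + (y.2.1 + z.2.1)
      rw [add_assoc]
    · show x.2.2 + y.2.2 + z.2.2 = x.2.2 + (y.2.2 + z.2.2)
      rw [add_assoc]
  one_mul x := by
    refine Prod.ext ?_ (Prod.ext ?_ ?_)
    · show 0 + x.1 + (0 : ℤ) • x.2.1 = x.1
      simp
    · show 0 + x.2.1 = x.2.1
      simp
    · show 0 + x.2.2 = x.2.2
      simp
  mul_one x := by
    refine Prod.ext ?_ (Prod.ext ?_ ?_)
    · show x.1 + 0 + x.2.2 • (0 : Zp p) = x.1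
      simp
    · show x.2.1 + 0 = x.2.1
      simp
    · show x.2.2 + 0 = x.2.2
      simp
  inv_mul_cancel x := by
    refine Prod.ext ?_ (Prod.ext ?_ ?_)
    · show -x.1 + x.2.2 • x.2.1 + x.1 + (-x.2.2) • x.2.1 = 0
      rw [neg_smul]; abel
    · show -x.2.1 + x.2.1 = 0
      simp
    · show -x.2.2 + x.2.2 = 0
      simp

/-- The normalized trace of an `n × n` complex matrix (`trN n 1 = 1`). -/
noncomputable def trN (n : ℕ) (A : Matrix (Fin n) (Fin n) ℂ) : ℂ :=
  A.trace / n

/-- The subgroup `H_p = {(a, b, 0) : a, b ∈ ℤ} ≤ G_p` (generated by `(1,0,0)` and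
`(0,1,0)`), as a set. -/
def HpSet (p : ℕ) : Set (Gp p) :=
  {g | (∃ k : ℤ, (g.1 : ℚ) = (k : ℚ)) ∧ (∃ k : ℤ, (g.2.1 : ℚ) = (k : ℚ)) ∧ g.2.2 = 0}


section GpLayer

variable {p : ℕ}

lemma Gp.mul_def (x y : Gp p) :
    x * y = (x.1 + y.1 + x.2.2 • y.2.1, x.2.1 + y.2.1, x.2.2 + y.2.2) := rfl

lemma Gp.one_def : (1 : Gp p) = (0, 0, 0) := rfl

/-- `(x, 0, 0)` -/
def wA (x : Zp p) : Gp p := (x, 0, 0)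
/-- `(0, x, 0)` -/
def wB (x : Zp p) : Gp p := (0, x, 0)
/-- `(0, 0, 1)` -/
def tG (p : ℕ) : Gp p := (0, 0, 1)

lemma wA_mul (x y : Zp p) : wA x * wA y = wA (x + y) := by
  simp [wA, Gp.mul_def]

lemma wA_pow (x : Zp p) (k : ℕ) : wA x ^ k = wA (k • x) := by
  induction k with
  | zero => simp [wA, Gp.one_def]
  | succ k ih => rw [pow_succ, ih, wA_mul, succ_nsmul]
      
lemma wA_wB_comm (x y : Zp p) : wA x * wB y = wB y * wA x := by
  simp [wA, wB, Gp.mul_def]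

lemma tG_pow (k : ℕ) : (tG p) ^ k = ((0 : Zp p), (0 : Zp p), (k : ℤ)) := by
  induction k with
  | zero => simp [Gp.one_def]
  | succ k ih => rw [pow_succ, ih, Gp.mul_def]; simp [tG, Prod.ext_iff]

lemma tG_pow_mul_wB (x : Zp p) (k : ℕ) :
    (tG p) ^ k * wB x = (wA x ^ k * wB x) * (tG p) ^ k := by
  rw [tG_pow, wA_pow]
  simp [Gp.mul_def, wA, wB, Prod.ext_iff, natCast_zsmul]

end GpLayer

section MatrixLayer

open Matrix

variable {n : ℕ}

lemma trace_conjT_mul (X Y : Matrix (Fin n) (Fin n) ℂ) :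
    (Xᴴ * Y).trace = ∑ q : Fin n × Fin n, (starRingEnd ℂ) (X q.1 q.2) * Y q.1 q.2 := by
  simp only [Matrix.trace, Matrix.diag, Matrix.mul_apply, Matrix.conjTranspose_apply]
  rw [Fintype.sum_prod_type]
  exact Finset.sum_comm


lemma trace_conjT_self_re (X : Matrix (Fin n) (Fin n) ℂ) :
    (Xᴴ * X).trace = ((∑ q : Fin n × Fin n, ‖X q.1 q.2‖ ^ 2 : ℝ) : ℂ) := by
  rw [trace_conjT_mul]
  push_cast
  exact Finset.sum_congr rfl fun q _ => RCLike.conj_mul (X q.1 q.2)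

lemma abs_trace_conjT_mul_le (X Y : Matrix (Fin n) (Fin n) ℂ) :
    ‖(Xᴴ * Y).trace‖ ≤
      Real.sqrt ((Xᴴ * X).trace.re) * Real.sqrt ((Yᴴ * Y).trace.re) := by
  classical
  set x : EuclideanSpace ℂ (Fin n × Fin n) := WithLp.toLp 2 (fun q => X q.1 q.2) with hx
  set y : EuclideanSpace ℂ (Fin n × Fin n) := WithLp.toLp 2 (fun q => Y q.1 q.2) with hy
  have h1 : (Xᴴ * Y).trace = inner ℂ x y := by
    rw [trace_conjT_mul, PiLp.inner_apply]
    simp [RCLike.inner_apply, x, y, mul_comm]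
  have h2 : Real.sqrt ((Xᴴ * X).trace.re) = ‖x‖ := by
    rw [trace_conjT_self_re, Complex.ofReal_re, EuclideanSpace.norm_eq]
  have h3 : Real.sqrt ((Yᴴ * Y).trace.re) = ‖y‖ := by
    rw [trace_conjT_self_re, Complex.ofReal_re, EuclideanSpace.norm_eq]
  rw [h1, h2, h3]
  exact norm_inner_le_norm x y

end MatrixLayer

section UnitaryStab

open Matrix

variable {n : ℕ}

lemma unitary_stab_key {U : Matrix (Fin n) (Fin n) ℂ}
    (hU : U ∈ Matrix.unitaryGroup (Fin n) ℂ) (v : Fin n → ℂ)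
    (hv : (Matrix.toLinAlgEquiv' U - 1) ((Matrix.toLinAlgEquiv' U - 1) v) = 0) :
    (Matrix.toLinAlgEquiv' U - 1) v = 0 := by
  have happ : ∀ x : Fin n → ℂ, (Matrix.toLinAlgEquiv' U - 1) x = U *ᵥ x - x := by
    intro x
    simp [LinearMap.sub_apply, Matrix.toLinAlgEquiv'_apply]
  simp only [happ] at hv ⊢
  set w : Fin n → ℂ := U *ᵥ v - v with hwdef
  have hUw : U *ᵥ w = w := by rwa [sub_eq_zero] at hv
  have hstar : Uᴴ * U = 1 := hU.1
  have hUHw : Uᴴ *ᵥ w = w := by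
    have h2 : (Uᴴ * U) *ᵥ w = w := by rw [hstar, Matrix.one_mulVec]
    rw [← Matrix.mulVec_mulVec] at h2
    rwa [hUw] at h2
  have hvm : star w ᵥ* U = star w := by
    have := Matrix.star_mulVec (M := Uᴴ) (v := w)
    rw [hUHw, Matrix.conjTranspose_conjTranspose] at this
    exact this.symm
  have hdot : star w ⬝ᵥ w = 0 := by
    have : star w ⬝ᵥ w = star w ⬝ᵥ (U *ᵥ v) - star w ⬝ᵥ v := by
      rw [hwdef, dotProduct_sub]
    rw [Matrix.dotProduct_mulVec, hvm] at this
    simpa using this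
  have hsum : ((∑ i, Complex.normSq (w i) : ℝ) : ℂ) = 0 := by
    rw [← hdot, dotProduct]
    push_cast
    refine Finset.sum_congr rfl fun i _ => ?_
    rw [Pi.star_apply, Complex.star_def, ← Complex.mul_conj]
    exact mul_comm _ _
  rw [Complex.ofReal_eq_zero] at hsum
  have hz : ∀ i, w i = 0 := by
    intro i
    have hge : ∀ i ∈ Finset.univ, (0:ℝ) ≤ Complex.normSq (w i) :=
      fun i _ => Complex.normSq_nonneg _
    have := (Finset.sum_eq_zero_iff_of_nonneg hge).mp hsum i (Finset.mem_univ i)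
    exact Complex.normSq_eq_zero.mp this
  have : w = 0 := funext hz
  rw [this]

lemma unitary_pow_eq_one {U : Matrix (Fin n) (Fin n) ℂ}
    (hU : U ∈ Matrix.unitaryGroup (Fin n) ℂ) {N : ℕ} (hN : N ≠ 0)
    (h : (Matrix.toLinAlgEquiv' U - 1) ^ N = 0) : U = 1 := by
  obtain ⟨k, rfl⟩ := Nat.exists_eq_succ_of_ne_zero hN
  have stab : ∀ (k : ℕ) (v : Fin n → ℂ),
      ((Matrix.toLinAlgEquiv' U - 1) ^ (k + 1)) v = 0 →
      (Matrix.toLinAlgEquiv' U - 1) v = 0 := by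
    intro k
    induction k with
    | zero => intro v hv; simpa using hv
    | succ k ih =>
      intro v hv
      refine unitary_stab_key hU v (ih _ ?_)
      have : ((Matrix.toLinAlgEquiv' U - 1) ^ (k + 1 + 1)) v
          = ((Matrix.toLinAlgEquiv' U - 1) ^ (k + 1)) ((Matrix.toLinAlgEquiv' U - 1) v) := by
        rw [pow_succ]
        rfl
      rw [← this]
      exact hv
  have : Matrix.toLinAlgEquiv' U = Matrix.toLinAlgEquiv' (1 : Matrix (Fin n) (Fin n) ℂ) := by
    rw [_root_.map_one]
    apply LinearMap.ext
    intro v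
    have := stab k v (by rw [h]; rfl)
    simp only [LinearMap.sub_apply, Module.End.one_apply, sub_eq_zero] at this
    simpa using this
  exact (Matrix.toLinAlgEquiv' (R := ℂ) (n := Fin n)).injective this

end UnitaryStab

section EigenLayer

open Matrix Polynomial

variable {n : ℕ}

lemma eig_pow_eq_one {a b t bi ti : Matrix (Fin n) (Fin n) ℂ}
    (hbbi : b * bi = 1) (htit : ti * t = 1)
    (hab : a * b = b * a) (habi : a * bi = bi * a)
    (hat : a * t = t * a) (hati : a * ti = ti * a)
    (htb : t * b = a * (b * t))
    {μ : ℂ} (hμ : Module.End.HasEigenvalue (Matrix.toLinAlgEquiv' a) μ) :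
    ∃ d : ℕ, 0 < d ∧ d ≤ n ∧ μ ^ d = 1 := by
  classical
  set f := Matrix.toLinAlgEquiv' a with hf
  set V := Module.End.eigenspace f μ with hV
  have hVne : V ≠ ⊥ := hμ
  -- commuting matrices preserve V
  have pres : ∀ c : Matrix (Fin n) (Fin n) ℂ, a * c = c * a →
      ∀ x ∈ V, (Matrix.toLinAlgEquiv' c) x ∈ V := by
    intro c hc x hx
    rw [hV, Module.End.mem_eigenspace_iff] at hx ⊢
    have : f ((Matrix.toLinAlgEquiv' c) x) = (Matrix.toLinAlgEquiv' c) (f x) := by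
      have h1 : f ∘ₗ (Matrix.toLinAlgEquiv' c) = Matrix.toLinAlgEquiv' (a * c) := by
        rw [_root_.map_mul]; rfl
      have h2 : (Matrix.toLinAlgEquiv' c) ∘ₗ f = Matrix.toLinAlgEquiv' (c * a) := by
        rw [_root_.map_mul]; rfl
      calc f ((Matrix.toLinAlgEquiv' c) x) = (f ∘ₗ (Matrix.toLinAlgEquiv' c)) x := rfl
      _ = (Matrix.toLinAlgEquiv' (a * c)) x := by rw [h1]
      _ = (Matrix.toLinAlgEquiv' (c * a)) x := by rw [hc]
      _ = ((Matrix.toLinAlgEquiv' c) ∘ₗ f) x := by rw [h2]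
      _ = (Matrix.toLinAlgEquiv' c) (f x) := rfl
    rw [this, hx, _root_.map_smul]
  have hgV := pres b hab
  have hgiV := pres bi habi
  have htV := pres t hat
  have htiV := pres ti hati
  set gV := (Matrix.toLinAlgEquiv' b).restrict hgV with hgVdef
  set giV := (Matrix.toLinAlgEquiv' bi).restrict hgiV with hgiVdef
  set tV := (Matrix.toLinAlgEquiv' t).restrict htV with htVdef
  set tiV := (Matrix.toLinAlgEquiv' ti).restrict htiV with htiVdef
  -- restricted relation
  have hrel : tV ∘ₗ gV = μ • (gV ∘ₗ tV) := by
    apply LinearMap.ext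
    intro x
    apply Subtype.ext
    have base : (Matrix.toLinAlgEquiv' t) ((Matrix.toLinAlgEquiv' b) (x : Fin n → ℂ))
        = f ((Matrix.toLinAlgEquiv' b) ((Matrix.toLinAlgEquiv' t) (x : Fin n → ℂ))) := by
      have h1 : (Matrix.toLinAlgEquiv' t) ∘ₗ (Matrix.toLinAlgEquiv' b)
          = Matrix.toLinAlgEquiv' (t * b) := by rw [_root_.map_mul]; rfl
      have h2 : f ∘ₗ ((Matrix.toLinAlgEquiv' b) ∘ₗ (Matrix.toLinAlgEquiv' t))
          = Matrix.toLinAlgEquiv' (a * (b * t)) := by rw [_root_.map_mul, _root_.map_mul]; rfl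
      calc (Matrix.toLinAlgEquiv' t) ((Matrix.toLinAlgEquiv' b) (x : Fin n → ℂ))
          = (Matrix.toLinAlgEquiv' (t * b)) (x : Fin n → ℂ) := by rw [← h1]; rfl
      _ = (Matrix.toLinAlgEquiv' (a * (b * t))) (x : Fin n → ℂ) := by rw [htb]
      _ = _ := by rw [← h2]; rfl
    have hmem : ((Matrix.toLinAlgEquiv' b) ((Matrix.toLinAlgEquiv' t) (x : Fin n → ℂ))) ∈ V :=
      hgV _ (htV _ x.2)
    rw [Module.End.mem_eigenspace_iff] at hmem
    calc ((tV ∘ₗ gV) x : Fin n → ℂ)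
        = (Matrix.toLinAlgEquiv' t) ((Matrix.toLinAlgEquiv' b) (x : Fin n → ℂ)) := rfl
    _ = f ((Matrix.toLinAlgEquiv' b) ((Matrix.toLinAlgEquiv' t) (x : Fin n → ℂ))) := base
    _ = μ • ((Matrix.toLinAlgEquiv' b) ((Matrix.toLinAlgEquiv' t) (x : Fin n → ℂ))) := hmem
    _ = ((μ • (gV ∘ₗ tV)) x : Fin n → ℂ) := rfl
  -- determinants
  have hdetg : LinearMap.det gV * LinearMap.det giV = 1 := by
    rw [← LinearMap.det_comp]
    have : gV ∘ₗ giV = LinearMap.id := by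
      apply LinearMap.ext
      intro x
      apply Subtype.ext
      have : (Matrix.toLinAlgEquiv' b) ((Matrix.toLinAlgEquiv' bi) (x : Fin n → ℂ))
          = (Matrix.toLinAlgEquiv' (b * bi)) (x : Fin n → ℂ) := by rw [_root_.map_mul]; rfl
      calc ((gV ∘ₗ giV) x : Fin n → ℂ)
          = (Matrix.toLinAlgEquiv' b) ((Matrix.toLinAlgEquiv' bi) (x : Fin n → ℂ)) := rfl
      _ = (Matrix.toLinAlgEquiv' (b * bi)) (x : Fin n → ℂ) := this
      _ = (x : Fin n → ℂ) := by rw [hbbi, _root_.map_one]; rfl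
    rw [this, LinearMap.det_id]
  have hdett : LinearMap.det tiV * LinearMap.det tV = 1 := by
    rw [← LinearMap.det_comp]
    have : tiV ∘ₗ tV = LinearMap.id := by
      apply LinearMap.ext
      intro x
      apply Subtype.ext
      have : (Matrix.toLinAlgEquiv' ti) ((Matrix.toLinAlgEquiv' t) (x : Fin n → ℂ))
          = (Matrix.toLinAlgEquiv' (ti * t)) (x : Fin n → ℂ) := by rw [_root_.map_mul]; rfl
      calc ((tiV ∘ₗ tV) x : Fin n → ℂ)
          = (Matrix.toLinAlgEquiv' ti) ((Matrix.toLinAlgEquiv' t) (x : Fin n → ℂ)) := rfl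
      _ = (Matrix.toLinAlgEquiv' (ti * t)) (x : Fin n → ℂ) := this
      _ = (x : Fin n → ℂ) := by rw [htit, _root_.map_one]; rfl
    rw [this, LinearMap.det_id]
  set d := Module.finrank ℂ V with hd
  have hdet_eq : LinearMap.det tV * LinearMap.det gV
      = μ ^ d * (LinearMap.det gV * LinearMap.det tV) := by
    calc LinearMap.det tV * LinearMap.det gV = LinearMap.det (tV ∘ₗ gV) :=
      (LinearMap.det_comp _ _).symm
    _ = LinearMap.det (μ • (gV ∘ₗ tV)) := by rw [hrel]
    _ = μ ^ d * LinearMap.det (gV ∘ₗ tV) := by rw [LinearMap.det_smul]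
    _ = μ ^ d * (LinearMap.det gV * LinearMap.det tV) := by rw [LinearMap.det_comp]
  refine ⟨d, ?_, ?_, ?_⟩
  · rw [hd]
    have : Nontrivial V := Submodule.nontrivial_iff_ne_bot.mpr hVne
    exact Module.finrank_pos
  · have h1 : d ≤ Module.finrank ℂ (Fin n → ℂ) := Submodule.finrank_le V
    simpa [Module.finrank_fintype_fun_eq_card] using h1
  · have hne : LinearMap.det gV * LinearMap.det tV ≠ 0 := by
      have h1 : LinearMap.det gV ≠ 0 := left_ne_zero_of_mul_eq_one hdetg
      have h2 : LinearMap.det tV ≠ 0 := right_ne_zero_of_mul_eq_one hdett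
      exact mul_ne_zero h1 h2
    have : LinearMap.det gV * LinearMap.det tV
        = μ ^ d * (LinearMap.det gV * LinearMap.det tV) := by
      rw [← hdet_eq, mul_comm]
    nth_rewrite 1 [← one_mul (LinearMap.det gV * LinearMap.det tV)] at this
    exact (mul_right_cancel₀ hne this.symm)

end EigenLayer

section EigenLayer2

open Matrix Polynomial

variable {n : ℕ}

lemma matrix_pow_factorial_eq_one {a b t bi ti : Matrix (Fin n) (Fin n) ℂ} (hn : 0 < n)
    (hua : a ∈ Matrix.unitaryGroup (Fin n) ℂ)
    (hbbi : b * bi = 1) (htit : ti * t = 1)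
    (hab : a * b = b * a) (habi : a * bi = bi * a)
    (hat : a * t = t * a) (hati : a * ti = ti * a)
    (htb : t * b = a * (b * t)) :
    a ^ n.factorial = 1 := by
  classical
  haveI : Nonempty (Fin n) := Fin.pos_iff_nonempty.mp hn
  set f := Matrix.toLinAlgEquiv' a with hf
  have hint : IsIntegral ℂ f := LinearMap.isIntegral f
  set m := minpoly ℂ f with hm
  have hroot : ∀ μ ∈ m.roots, μ ^ n.factorial = 1 := by
    intro μ hμ
    have hev : Module.End.HasEigenvalue f μ :=
      Module.End.hasEigenvalue_of_isRoot (Polynomial.isRoot_of_mem_roots hμ)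
    obtain ⟨d, hd0, hdn, hd1⟩ := eig_pow_eq_one hbbi htit hab habi hat hati htb hev
    obtain ⟨c, hc⟩ := Nat.dvd_factorial hd0 hdn
    rw [hc, pow_mul, hd1, one_pow]
  have hsplit : m.Splits := IsAlgClosed.splits m
  have hmonic : m.Monic := minpoly.monic hint
  have hprod : m = (m.roots.map fun μ => X - C μ).prod :=
    hsplit.eq_prod_roots_of_monic hmonic
  set N := Multiset.card m.roots with hN
  have hdvd : m ∣ ((X : ℂ[X]) ^ n.factorial - 1) ^ N := by
    rw [hprod]
    have hrepl : ((X:ℂ[X]) ^ n.factorial - 1) ^ N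
        = (m.roots.map fun _ => (X:ℂ[X]) ^ n.factorial - 1).prod := by
      rw [Multiset.map_const', Multiset.prod_replicate]
    rw [hrepl]
    apply Multiset.prod_dvd_prod_of_dvd
    intro μ hμ
    rw [Polynomial.dvd_iff_isRoot]
    simp [Polynomial.IsRoot, sub_eq_zero, hroot μ hμ]
  have hN0 : N ≠ 0 := by
    have hpos : 0 < m.natDegree := minpoly.natDegree_pos hint
    rw [hN, (Polynomial.splits_iff_card_roots).mp hsplit]
    omega
  obtain ⟨cpoly, hcp⟩ := hdvd
  have haev : Polynomial.aeval f (((X:ℂ[X]) ^ n.factorial - 1) ^ N) = 0 := by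
    rw [hcp, _root_.map_mul, hm, minpoly.aeval, zero_mul]
  have heq : (Matrix.toLinAlgEquiv' (a ^ n.factorial) - 1) ^ N = 0 := by
    have h1 : Polynomial.aeval f (((X:ℂ[X]) ^ n.factorial - 1) ^ N)
        = (f ^ n.factorial - 1) ^ N := by
      simp [_root_.map_pow, map_sub, Polynomial.aeval_X, _root_.map_one]
    rw [h1] at haev
    rw [_root_.map_pow]
    exact haev
  exact unitary_pow_eq_one (pow_mem hua _) hN0 heq

end EigenLayer2

section CoreIneq

open Matrix

lemma core_matrix_ineq {p' n : ℕ} (hp2 : 2 ≤ p') (hn : 0 < n)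
    {a0 a1 b0 : Matrix (Fin n) (Fin n) ℂ}
    (ha1u : a1 ∈ Matrix.unitaryGroup (Fin n) ℂ) (hb0u : b0 ∈ Matrix.unitaryGroup (Fin n) ℂ)
    {m' : ℕ} (hcop : Nat.Coprime p' m')
    (ha1p : a1 ^ p' = a0)
    (ha0m : a0 ^ n.factorial = 1)
    (ha1m : a1 ^ m' = 1)
    (htr : ∀ k : ℕ, (a0 ^ k * b0).trace = b0.trace) :
    2 * b0.trace.re - n ≤ a1.trace.re := by
  classical
  have ha0u : a0 ∈ Matrix.unitaryGroup (Fin n) ℂ := by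
    rw [← ha1p]; exact pow_mem ha1u _
  set m := n.factorial with hmdef
  have hm0 : 0 < m := Nat.factorial_pos n
  have hmC : (m : ℂ) ≠ 0 := by exact_mod_cast hm0.ne'
  have hpowfix : ∀ (c : Matrix (Fin n) (Fin n) ℂ) (v : Fin n → ℂ), c *ᵥ v = v →
      ∀ k : ℕ, c ^ k *ᵥ v = v := by
    intro c v hv k
    induction k with
    | zero => simp
    | succ k ih => rw [pow_succ, ← Matrix.mulVec_mulVec, hv, ih]
  have hfix : ∀ v : Fin n → ℂ, a0 *ᵥ v = v → a1 *ᵥ v = v := by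
    intro v hv
    have hm'0 : m' ≠ 0 := by
      intro h
      rw [h] at hcop
      have : p' = 1 := by simpa [Nat.Coprime] using hcop
      omega
    rcases eq_or_lt_of_le (Nat.one_le_iff_ne_zero.mpr hm'0) with h1 | h1
    · have : a1 = 1 := by rw [← ha1m, ← h1, pow_one]
      rw [this, Matrix.one_mulVec]
    · obtain ⟨u, -, hu⟩ := Nat.exists_mul_mod_eq_one_of_coprime hcop h1
      have hdiv : m' * (p' * u / m') + 1 = p' * u := by
        have h2 := Nat.div_add_mod (p' * u) m'
        omega
      have e1 : a1 ^ (p' * u) = a1 := by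
        rw [← hdiv, pow_add, pow_one, pow_mul, ha1m, one_pow, one_mul]
      have e2 : a1 ^ (p' * u) = a0 ^ u := by rw [pow_mul, ha1p]
      calc a1 *ᵥ v = a1 ^ (p' * u) *ᵥ v := by rw [e1]
      _ = a0 ^ u *ᵥ v := by rw [e2]
      _ = v := hpowfix a0 v hv u
  -- the averaging matrix Q
  set S : Matrix (Fin n) (Fin n) ℂ := ∑ k ∈ Finset.range m, a0 ^ k with hSdef
  set Q : Matrix (Fin n) (Fin n) ℂ := ((m : ℂ))⁻¹ • S with hQdef
  have hSa : S * a0 = S := by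
    rw [hSdef, Finset.sum_mul]
    have h1 : ∀ k ∈ Finset.range m, a0 ^ k * a0 = a0 ^ (k + 1) := fun k _ => (pow_succ a0 k).symm
    rw [Finset.sum_congr rfl h1]
    have h3 : (∑ k ∈ Finset.range m, a0 ^ (k + 1)) + a0 ^ 0
        = (∑ k ∈ Finset.range m, a0 ^ k) + a0 ^ m := by
      rw [← Finset.sum_range_succ' (fun k => a0 ^ k) m, Finset.sum_range_succ]
    rw [ha0m, pow_zero] at h3
    exact add_right_cancel h3
  have haS : a0 * S = S := by
    rw [hSdef, Finset.mul_sum]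
    have h1 : ∀ k ∈ Finset.range m, a0 * a0 ^ k = a0 ^ (k + 1) := fun k _ => (pow_succ' a0 k).symm
    rw [Finset.sum_congr rfl h1]
    have h3 : (∑ k ∈ Finset.range m, a0 ^ (k + 1)) + a0 ^ 0
        = (∑ k ∈ Finset.range m, a0 ^ k) + a0 ^ m := by
      rw [← Finset.sum_range_succ' (fun k => a0 ^ k) m, Finset.sum_range_succ]
    rw [ha0m, pow_zero] at h3
    exact add_right_cancel h3
  have haQ : a0 * Q = Q := by rw [hQdef, mul_smul_comm, haS]
  have hQa : Q * a0 = Q := by rw [hQdef, smul_mul_assoc, hSa]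
  have hakS : ∀ k : ℕ, a0 ^ k * S = S := by
    intro k
    induction k with
    | zero => rw [pow_zero, one_mul]
    | succ k ih => rw [pow_succ, mul_assoc, haS, ih]
  have hQak : ∀ k : ℕ, Q * a0 ^ k = Q := by
    intro k
    induction k with
    | zero => rw [pow_zero, mul_one]
    | succ k ih => rw [pow_succ, ← mul_assoc, ih, hQa]
  have hakQ : ∀ k : ℕ, a0 ^ k * Q = Q := by
    intro k
    rw [hQdef, mul_smul_comm, hakS k]
  have hSQ : S * Q = (m : ℂ) • Q := by
    rw [hSdef, Finset.sum_mul]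
    have h1 : ∀ k ∈ Finset.range m, a0 ^ k * Q = Q := fun k _ => hakQ k
    rw [Finset.sum_congr rfl h1, Finset.sum_const, Finset.card_range]
    rw [← Nat.cast_smul_eq_nsmul ℂ m Q]
  have hQQ : Q * Q = Q := by
    nth_rewrite 1 [hQdef]
    rw [smul_mul_assoc, hSQ, smul_smul, inv_mul_cancel₀ hmC, one_smul]
  have hstar_pow : ∀ k : ℕ, (a0 ^ k)ᴴ * (a0 ^ k) = 1 ∧ (a0 ^ k) * (a0 ^ k)ᴴ = 1 := by
    intro k
    have hk : a0 ^ k ∈ Matrix.unitaryGroup (Fin n) ℂ := pow_mem ha0u _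
    exact ⟨hk.1, hk.2⟩
  have hcstar : star ((m:ℂ))⁻¹ = ((m:ℂ))⁻¹ := by simp
  have hQHQ : Qᴴ * Q = Q := by
    rw [hQdef, Matrix.conjTranspose_smul, hSdef, Matrix.conjTranspose_sum]
    rw [Finset.smul_sum, Finset.sum_mul]
    have h1 : ∀ k ∈ Finset.range m,
        (star ((m:ℂ))⁻¹ • (a0 ^ k)ᴴ) * Q = ((m:ℂ))⁻¹ • Q := by
      intro k _
      rw [smul_mul_assoc, hcstar]
      congr 1
      calc (a0 ^ k)ᴴ * Q = (a0 ^ k)ᴴ * (a0 ^ k * Q) := by rw [hakQ k]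
      _ = ((a0 ^ k)ᴴ * (a0 ^ k)) * Q := by rw [mul_assoc]
      _ = Q := by rw [(hstar_pow k).1, one_mul]
    rw [Finset.sum_congr rfl h1, Finset.sum_const, Finset.card_range]
    rw [← Nat.cast_smul_eq_nsmul ℂ m (((m:ℂ))⁻¹ • Q), smul_smul, mul_inv_cancel₀ hmC, one_smul]
  have hQQH : Q * Qᴴ = Q := by
    nth_rewrite 2 [hQdef]
    rw [Matrix.conjTranspose_smul, hSdef, Matrix.conjTranspose_sum]
    rw [Finset.smul_sum, Finset.mul_sum]
    have h1 : ∀ k ∈ Finset.range m,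
        Q * (star ((m:ℂ))⁻¹ • (a0 ^ k)ᴴ) = ((m:ℂ))⁻¹ • Q := by
      intro k _
      rw [mul_smul_comm, hcstar]
      congr 1
      calc Q * (a0 ^ k)ᴴ = (Q * a0 ^ k) * (a0 ^ k)ᴴ := by rw [hQak k]
      _ = Q * ((a0 ^ k) * (a0 ^ k)ᴴ) := by rw [mul_assoc]
      _ = Q := by rw [(hstar_pow k).2, mul_one]
    rw [Finset.sum_congr rfl h1, Finset.sum_const, Finset.card_range]
    rw [← Nat.cast_smul_eq_nsmul ℂ m (((m:ℂ))⁻¹ • Q), smul_smul, mul_inv_cancel₀ hmC, one_smul]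
  -- D
  have hSre := trace_conjT_self_re Q
  set D : ℝ := ∑ q : Fin n × Fin n, ‖Q q.1 q.2‖ ^ 2 with hDdef
  have hD0 : (0:ℝ) ≤ D := Finset.sum_nonneg fun q _ => sq_nonneg _
  have hQtr : Q.trace = (D : ℂ) := by rw [← hQHQ, hSre]
  -- trace(Q b0) = trace b0
  have htrQb : (Q * b0).trace = b0.trace := by
    rw [hQdef, smul_mul_assoc, Matrix.trace_smul, hSdef, Finset.sum_mul, Matrix.trace_sum]
    rw [Finset.sum_congr rfl (fun k _ => htr k), Finset.sum_const, Finset.card_range]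
    rw [← Nat.cast_smul_eq_nsmul ℂ m (Matrix.trace b0), smul_smul, inv_mul_cancel₀ hmC, one_smul]
  -- CS bound 1
  have hb1 : ‖(Q * b0).trace‖ ≤ D := by
    have hXY : (Qᴴᴴ * (Q * b0)).trace = (Q * b0).trace := by
      rw [Matrix.conjTranspose_conjTranspose, ← mul_assoc, hQQ]
    have hcs := abs_trace_conjT_mul_le (Qᴴ) (Q * b0)
    rw [hXY] at hcs
    have h2 : (Qᴴᴴ * Qᴴ).trace = (D:ℂ) := by
      rw [Matrix.conjTranspose_conjTranspose, hQQH, hQtr]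
    have h3 : ((Q * b0)ᴴ * (Q * b0)).trace = (D:ℂ) := by
      rw [Matrix.conjTranspose_mul]
      have e : (b0ᴴ * Qᴴ) * (Q * b0) = b0ᴴ * ((Qᴴ * Q) * b0) := by
        rw [mul_assoc, mul_assoc]
      rw [e, Matrix.trace_mul_comm, mul_assoc]
      have hb0s : b0 * b0ᴴ = 1 := hb0u.2
      rw [hb0s, mul_one, hQHQ, hQtr]
    rw [h2, h3] at hcs
    calc ‖(Q * b0).trace‖
        ≤ Real.sqrt (((D:ℝ):ℂ)).re * Real.sqrt (((D:ℝ):ℂ)).re := hcs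
    _ = D := by rw [Complex.ofReal_re, Real.mul_self_sqrt hD0]
  have hreb0 : b0.trace.re ≤ D := by
    calc b0.trace.re ≤ ‖b0.trace‖ := Complex.re_le_norm _
    _ = ‖(Q * b0).trace‖ := by rw [htrQb]
    _ ≤ D := hb1
  -- R = 1 - Q
  set R : Matrix (Fin n) (Fin n) ℂ := 1 - Q with hRdef
  have hQR : Q + R = 1 := by rw [hRdef]; abel
  have hRR : R * R = R := by
    rw [hRdef, sub_mul, one_mul, mul_sub, mul_one, hQQ]
    abel
  have hRH : Rᴴ = 1 - Qᴴ := by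
    rw [hRdef, Matrix.conjTranspose_sub, Matrix.conjTranspose_one]
  have hRRH : R * Rᴴ = 1 - Qᴴ := by
    rw [hRdef, hRH, mul_sub, sub_mul, sub_mul, one_mul, one_mul, mul_one, hQQH]
    abel
  have hRHR : Rᴴ * R = 1 - Qᴴ := by
    rw [hRdef, hRH, mul_sub, sub_mul, sub_mul, one_mul, one_mul, mul_one, hQHQ]
    abel
  have htr1Q : (1 - Qᴴ : Matrix (Fin n) (Fin n) ℂ).trace = ((n - D : ℝ) : ℂ) := by
    rw [Matrix.trace_sub, Matrix.trace_one, Matrix.trace_conjTranspose, hQtr]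
    rw [Complex.star_def, Complex.conj_ofReal, Fintype.card_fin]
    push_cast
    ring
  have hnD0 : (0:ℝ) ≤ (n : ℝ) - D := by
    have h5 := trace_conjT_self_re R
    rw [hRHR, htr1Q] at h5
    have h6 : (n : ℝ) - D = ∑ q : Fin n × Fin n, ‖R q.1 q.2‖ ^ 2 := by exact_mod_cast h5
    rw [h6]
    exact Finset.sum_nonneg fun q _ => sq_nonneg _
  -- a1 Q = Q
  have ha1Q : a1 * Q = Q := by
    have hcols : ∀ v, (a1 * Q) *ᵥ v = Q *ᵥ v := by
      intro v
      rw [← Matrix.mulVec_mulVec]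
      apply hfix
      rw [Matrix.mulVec_mulVec, haQ]
    apply Matrix.ext
    intro i j
    have h := congrFun (hcols (Pi.single j 1)) i
    rw [Matrix.mulVec_single, Matrix.mulVec_single] at h
    simpa using h
  have htra1 : a1.trace = (D : ℂ) + (a1 * R).trace := by
    have hsplit : a1 = a1 * Q + a1 * R := by rw [← mul_add, hQR, mul_one]
    calc a1.trace = (a1 * Q + a1 * R).trace := by rw [← hsplit]
    _ = (a1 * Q).trace + (a1 * R).trace := Matrix.trace_add _ _
    _ = (D:ℂ) + (a1 * R).trace := by rw [ha1Q, hQtr]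
  -- CS bound 2
  have hb2 : ‖(a1 * R).trace‖ ≤ (n : ℝ) - D := by
    have htr2 : (Rᴴᴴ * (R * a1)).trace = (a1 * R).trace := by
      rw [Matrix.conjTranspose_conjTranspose, ← mul_assoc, hRR, Matrix.trace_mul_comm]
    have hcs := abs_trace_conjT_mul_le (Rᴴ) (R * a1)
    rw [htr2] at hcs
    have h2 : (Rᴴᴴ * Rᴴ).trace = ((n - D : ℝ):ℂ) := by
      rw [Matrix.conjTranspose_conjTranspose, hRRH, htr1Q]
    have h3 : ((R * a1)ᴴ * (R * a1)).trace = ((n - D : ℝ):ℂ) := by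
      rw [Matrix.conjTranspose_mul]
      have e : (a1ᴴ * Rᴴ) * (R * a1) = a1ᴴ * ((Rᴴ * R) * a1) := by
        rw [mul_assoc, mul_assoc]
      rw [e, Matrix.trace_mul_comm, mul_assoc]
      have ha1s : a1 * a1ᴴ = 1 := ha1u.2
      rw [ha1s, mul_one, hRHR, htr1Q]
    rw [h2, h3] at hcs
    calc ‖(a1 * R).trace‖
        ≤ Real.sqrt (((n - D:ℝ):ℂ)).re * Real.sqrt (((n - D:ℝ):ℂ)).re := hcs
    _ = (n:ℝ) - D := by rw [Complex.ofReal_re, Real.mul_self_sqrt hnD0]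
  -- final
  have hre1 : a1.trace.re = D + (a1 * R).trace.re := by
    rw [htra1, Complex.add_re, Complex.ofReal_re]
  have h4 : -((n:ℝ) - D) ≤ (a1 * R).trace.re := by
    have h5 := Complex.abs_re_le_norm ((a1 * R).trace)
    have h6 := neg_abs_le ((a1 * R).trace.re)
    linarith
  linarith

end CoreIneq

section ZpElems


variable {p : ℕ}

/-- `p^{-j}` as an element of `Zp p`. -/
def zpinv (p : ℕ) (hp : (p:ℚ) ≠ 0) (j : ℕ) : Zp p :=
  ⟨((p:ℚ)^j)⁻¹, 1, j, by field_simp; norm_num⟩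

lemma zpinv_coe (hp : (p:ℚ) ≠ 0) (j : ℕ) : ((zpinv p hp j : Zp p) : ℚ) = ((p:ℚ)^j)⁻¹ := rfl

lemma zpinv_zero_coe (hp : (p:ℚ) ≠ 0) : ((zpinv p hp 0 : Zp p) : ℚ) = 1 := by
  rw [zpinv_coe, pow_zero, inv_one]

lemma smul_zpinv (hp : (p:ℚ) ≠ 0) (i j : ℕ) :
    (p ^ i : ℕ) • zpinv p hp (i + j) = zpinv p hp j := by
  apply Subtype.ext
  push_cast [zpinv_coe]
  rw [pow_add, nsmul_eq_mul]
  push_cast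
  field_simp

lemma tG_mul_wA (x : Zp p) : tG p * wA x = wA x * tG p := by
  simp [tG, wA, Gp.mul_def, Prod.ext_iff]

lemma tG_mul_wB (x : Zp p) : tG p * wB x = (wA x * wB x) * tG p := by
  have := tG_pow_mul_wB (p := p) x 1
  simpa [pow_one] using this

end ZpElems

section RepIneq

open Matrix

lemma rep_ineq (p : ℕ) (hp : p.Prime) (hp0 : (p:ℚ) ≠ 0) {n : ℕ} (hn : 0 < n)
    (ρ : Gp p →* Matrix.unitaryGroup (Fin n) ℂ) :
    2 * ((ρ (wB (zpinv p hp0 0))).val.trace.re) - n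
      ≤ ((ρ (wA (zpinv p hp0 1))).val.trace.re) := by
  classical
  set s := (n.factorial).factorization p with hs
  set m' := n.factorial / p ^ s with hm'
  have hfne : n.factorial ≠ 0 := (Nat.factorial_pos n).ne'
  have hps : p ^ s * m' = n.factorial := Nat.ordProj_mul_ordCompl_eq_self n.factorial p
  have hcop : Nat.Coprime p m' := Nat.coprime_ordCompl hp hfne
  set A1 := ρ (wA (zpinv p hp0 1)) with hA1
  set A0 := ρ (wA (zpinv p hp0 0)) with hA0
  set B0 := ρ (wB (zpinv p hp0 0)) with hB0
  set As := ρ (wA (zpinv p hp0 (s+1))) with hAs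
  set Bs := ρ (wB (zpinv p hp0 (s+1))) with hBs
  set T := ρ (tG p) with hT
  have hpowA : ∀ (i j : ℕ), (ρ (wA (zpinv p hp0 (i+j)))) ^ (p ^ i) = ρ (wA (zpinv p hp0 j)) := by
    intro i j
    rw [← _root_.map_pow, wA_pow, smul_zpinv]
  -- group-level relations
  have hABg : As * Bs = Bs * As := by
    rw [hAs, hBs, ← _root_.map_mul, ← _root_.map_mul, wA_wB_comm]
  have hATg : As * T = T * As := by
    rw [hAs, hT, ← _root_.map_mul, ← _root_.map_mul, tG_mul_wA]
  have hTBg : T * Bs = As * Bs * T := by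
    rw [hAs, hBs, hT, ← _root_.map_mul, ← _root_.map_mul, ← _root_.map_mul, tG_mul_wB]
  -- matrix-level inputs for Lemma A
  have hcoe_pow : ∀ (x : Matrix.unitaryGroup (Fin n) ℂ) (k : ℕ),
      (x ^ k).val = x.val ^ k := fun x k => SubmonoidClass.coe_pow x k
  have hbbi : Bs.val * (Bs⁻¹).val = 1 := congrArg Subtype.val (mul_inv_cancel Bs)
  have htit : (T⁻¹).val * T.val = 1 := congrArg Subtype.val (inv_mul_cancel T)
  have hab : As.val * Bs.val = Bs.val * As.val := congrArg Subtype.val hABg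
  have habi : As.val * (Bs⁻¹).val = (Bs⁻¹).val * As.val := by
    have hcomm : Commute As Bs := hABg
    exact congrArg Subtype.val hcomm.inv_right.eq
  have hat : As.val * T.val = T.val * As.val := congrArg Subtype.val hATg
  have hati : As.val * (T⁻¹).val = (T⁻¹).val * As.val := by
    have hcomm : Commute As T := hATg
    exact congrArg Subtype.val hcomm.inv_right.eq
  have htb : T.val * Bs.val = As.val * (Bs.val * T.val) := by
    have h2 : T.val * Bs.val = As.val * Bs.val * T.val := congrArg Subtype.val hTBg
    rw [h2, mul_assoc]
  have hAsF : As.val ^ n.factorial = 1 :=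
    matrix_pow_factorial_eq_one hn (SetLike.coe_mem As) hbbi htit hab habi hat hati htb
  -- inputs for the core inequality
  have hA1pow : A1 ^ p = A0 := by
    have h := hpowA 1 0
    rw [pow_one] at h
    exact h
  have ha1p : A1.val ^ p = A0.val := by rw [← hcoe_pow, hA1pow]
  have hA0s : As ^ (p ^ (s+1)) = A0 := hpowA (s+1) 0
  have hA1s : As ^ (p ^ s) = A1 := hpowA s 1
  have ha0m : A0.val ^ n.factorial = 1 := by
    rw [← hA0s, hcoe_pow, ← pow_mul, mul_comm, pow_mul, hAsF, one_pow]
  have ha1m : A1.val ^ m' = 1 := by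
    rw [← hA1s, hcoe_pow, ← pow_mul, hps, hAsF]
  have htr : ∀ k : ℕ, (A0.val ^ k * B0.val).trace = B0.val.trace := by
    intro k
    have hg : T ^ k * B0 = (A0 ^ k * B0) * T ^ k := by
      rw [hT, hB0, hA0, ← _root_.map_pow, ← _root_.map_mul, ← _root_.map_pow,
        ← _root_.map_mul, ← _root_.map_mul, tG_pow_mul_wB]
    have hmm : (T ^ k).val * B0.val = (A0 ^ k).val * B0.val * (T ^ k).val :=
      congrArg Subtype.val hg
    have hinv : (T ^ k).val * ((T ^ k)⁻¹).val = 1 :=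
      congrArg Subtype.val (mul_inv_cancel (T ^ k))
    have hinv2 : ((T ^ k)⁻¹).val * (T ^ k).val = 1 :=
      congrArg Subtype.val (inv_mul_cancel (T ^ k))
    have key : ((A0 ^ k).val * B0.val).trace = B0.val.trace := by
      calc ((A0 ^ k).val * B0.val).trace
          = (((A0 ^ k).val * B0.val) * ((T ^ k).val * ((T ^ k)⁻¹).val)).trace := by
            rw [hinv, mul_one]
      _ = ((((A0 ^ k).val * B0.val) * (T ^ k).val) * ((T ^ k)⁻¹).val).trace := by
            rw [mul_assoc ((A0 ^ k).val * B0.val) ((T ^ k).val) (((T ^ k)⁻¹).val)]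
      _ = (((T ^ k).val * B0.val) * ((T ^ k)⁻¹).val).trace := by rw [← hmm]
      _ = (((T ^ k)⁻¹).val * ((T ^ k).val * B0.val)).trace := Matrix.trace_mul_comm _ _
      _ = B0.val.trace := by rw [← mul_assoc, hinv2, one_mul]
    rwa [hcoe_pow] at key
  exact core_matrix_ineq hp.two_le hn (SetLike.coe_mem A1) (SetLike.coe_mem B0)
    hcop ha1p ha0m ha1m htr

end RepIneq

/-- if `G_p` embeds in a group `K` with the image of `H_p` normal in `K`,
then the trace `τ = 1_{ι(H_p)}` on `K` is not a pointwise limit of finite-dimensional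
traces of `K`. -/
theorem Hp_trace_not_limit_of_fd_traces_overgroup (p : ℕ) (hp : p.Prime)
    (K : Type) [Group K] (ι : Gp p →* K) (hι : Function.Injective ι)
    (hnormal : ∀ x ∈ ι '' HpSet p, ∀ k : K, k * x * k⁻¹ ∈ ι '' HpSet p) :
    ¬ ∃ (n : ℕ → ℕ) (σ : ∀ k, K →* Matrix.unitaryGroup (Fin (n k)) ℂ),
        (∀ k, 0 < n k) ∧
        ∀ g : K,
          (g ∈ ι '' HpSet p → Tendsto (fun k => trN (n k) (σ k g)) atTop (nhds 1)) ∧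
          (g ∉ ι '' HpSet p → Tendsto (fun k => trN (n k) (σ k g)) atTop (nhds 0)) := by
  rintro ⟨nk, σ, hpos, hlim⟩
  have hp0 : (p:ℚ) ≠ 0 := by exact_mod_cast hp.ne_zero
  set gB : Gp p := wB (zpinv p hp0 0) with hgB
  set gA : Gp p := wA (zpinv p hp0 1) with hgA
  have hgB_mem : ι gB ∈ ι '' HpSet p := by
    refine ⟨gB, ?_, rfl⟩
    refine ⟨⟨0, by simp [hgB, wB]⟩, ⟨1, ?_⟩, rfl⟩
    show ((zpinv p hp0 0 : Zp p) : ℚ) = ((1:ℤ):ℚ)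
    rw [zpinv_zero_coe]
    norm_num
  have hgA_not : ι gA ∉ ι '' HpSet p := by
    rintro ⟨h, hh, heq⟩
    have hhg : h = gA := hι heq
    subst hhg
    obtain ⟨⟨k, hk⟩, -, -⟩ := hh
    rw [hgA] at hk
    have hk' : ((p:ℚ)^(1:ℕ))⁻¹ = (k:ℚ) := hk
    have hp1 : (1:ℚ) < (p:ℚ) := by exact_mod_cast hp.one_lt
    have h1 : (0:ℚ) < ((p:ℚ)^(1:ℕ))⁻¹ := by
      rw [pow_one]
      positivity
    have h2 : ((p:ℚ)^(1:ℕ))⁻¹ < 1 := by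
      rw [pow_one]
      rw [inv_lt_one_iff₀]
      right; exact hp1
    rw [hk'] at h1 h2
    have h3 : (0:ℤ) < k := by exact_mod_cast h1
    have h4 : k < (1:ℤ) := by exact_mod_cast h2
    omega
  have h1 := (hlim (ι gB)).1 hgB_mem
  have h2 := (hlim (ι gA)).2 hgA_not
  have hre1 : Tendsto (fun k => (trN (nk k) (σ k (ι gB))).re) atTop (nhds 1) := by
    have := (Complex.continuous_re.tendsto (1:ℂ)).comp h1
    simpa [Function.comp_def] using this
  have hre2 : Tendsto (fun k => (trN (nk k) (σ k (ι gA))).re) atTop (nhds 0) := by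
    have := (Complex.continuous_re.tendsto (0:ℂ)).comp h2
    simpa [Function.comp_def] using this
  have hineq : ∀ k, 2 * (trN (nk k) (σ k (ι gB))).re - 1 ≤ (trN (nk k) (σ k (ι gA))).re := by
    intro k
    have hineq0 := rep_ineq p hp hp0 (hpos k) ((σ k).comp ι)
    have hnpos : (0:ℝ) < (nk k : ℝ) := by exact_mod_cast hpos k
    have hBeq : trN (nk k) (σ k (ι gB)) = ((σ k).comp ι (wB (zpinv p hp0 0))).val.trace / (nk k) := rfl
    have hAeq : trN (nk k) (σ k (ι gA)) = ((σ k).comp ι (wA (zpinv p hp0 1))).val.trace / (nk k) := rfl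
    rw [hBeq, hAeq]
    have hcast : ((nk k : ℕ) : ℂ) = (((nk k : ℕ) : ℝ) : ℂ) := by push_cast; ring
    rw [hcast, Complex.div_ofReal_re, Complex.div_ofReal_re]
    set Bre := (((σ k).comp ι) (wB (zpinv p hp0 0))).val.trace.re with hBre
    set Are := (((σ k).comp ι) (wA (zpinv p hp0 1))).val.trace.re with hAre
    have h5 : 2 * (Bre / ((nk k : ℕ):ℝ)) - 1 = (2 * Bre - (nk k : ℕ)) / ((nk k : ℕ):ℝ) := by
      field_simp
    rw [h5]
    have h6 : 2 * Bre - ((nk k : ℕ):ℝ) ≤ Are := hineq0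
    gcongr
  have hre1' : Tendsto (fun k => 2 * (trN (nk k) (σ k (ι gB))).re - 1) atTop (nhds 1) := by
    have := (hre1.const_mul 2).sub_const 1
    norm_num at this
    exact this
  have hle : (1:ℝ) ≤ 0 := le_of_tendsto_of_tendsto' hre1' hre2 hineq
  norm_num at hle
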